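/- Let 𝒳 be a finite set of cardinality k > 1 and d > 1 finite. The map P ↦ λ_ℰ(P) from the probability measures on 𝒳^d (with the total variation metric) to ℝ is continuous. -/

import Mathlib

open scoped BigOperators Classical

/-- A function `P : Ω → ℝ` on a finite sample space is a probability measure if it is
nonnegative and sums to one. -/
def IsProb {Ω : Type*} [Fintype Ω] (P : Ω → ℝ) : Prop :=
  (∀ ω, 0 ≤ P ω) ∧ ∑ ω, P ω = 1

/-- A probability measure on `𝒳^ι` is exchangeable if it is invariant under all
coordinate permutations. -/
def Exchangeable {ι 𝒳 : Type*} (Q : (ι → 𝒳) → ℝ) : Prop :=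
  ∀ σ : Equiv.Perm ι, ∀ x : ι → 𝒳, Q (x ∘ σ) = Q x

/-- The exchangeable weight `λ_ℰ(P)`: the supremum of `λ` such that `P ≥ λ·Q` pointwise
for some exchangeable probability measure `Q`. -/
noncomputable def exchWeight {ι 𝒳 : Type*} [Fintype ι] [Fintype 𝒳]
    (P : (ι → 𝒳) → ℝ) : ℝ :=
  sSup {l : ℝ | ∃ Q : (ι → 𝒳) → ℝ, IsProb Q ∧ Exchangeable Q ∧ ∀ x, l * Q x ≤ P x}

/-- The permutation-equivalence class `[x]` of `x`, as a set. -/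
def permSet {ι 𝒳 : Type*} (x : ι → 𝒳) : Set (ι → 𝒳) :=
  {y | ∃ σ : Equiv.Perm ι, y = x ∘ σ}

/-- The permutation-equivalence class `[x]` of `x`, as a finset. -/
noncomputable def permClass {ι 𝒳 : Type*} [Fintype ι] (x : ι → 𝒳) :
    Finset (ι → 𝒳) :=
  Finset.univ.image (fun σ : Equiv.Perm ι => x ∘ σ)


/-- The total variation distance `(1/2) Σ_x |P₁(x) − P₂(x)|`. -/
noncomputable def tvDist {Ω : Type*} [Fintype Ω] (P₁ P₂ : Ω → ℝ) : ℝ :=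
  (1 / 2) * ∑ x, |P₁ x - P₂ x|

set_option linter.unusedSectionVars false
set_option linter.unusedVariables false

section Aux
variable {ι 𝒳 : Type*} [Fintype ι] [Fintype 𝒳]

lemma permClass_nonempty (x : ι → 𝒳) : (permClass x).Nonempty :=
  ⟨x, Finset.mem_image.2 ⟨Equiv.refl ι, Finset.mem_univ _, rfl⟩⟩

lemma permClass_comp (x : ι → 𝒳) (σ : Equiv.Perm ι) :
    permClass (x ∘ σ) = permClass x := by
  ext y
  simp only [permClass, Finset.mem_image, Finset.mem_univ, true_and]
  constructor
  · rintro ⟨τ, rfl⟩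
    exact ⟨τ.trans σ, rfl⟩
  · rintro ⟨ρ, rfl⟩
    refine ⟨ρ.trans σ.symm, ?_⟩
    ext i; simp

noncomputable def minCl (P : (ι → 𝒳) → ℝ) (x : ι → 𝒳) : ℝ :=
  (permClass x).inf' (permClass_nonempty x) P

lemma minCl_comp (P : (ι → 𝒳) → ℝ) (x : ι → 𝒳) (σ : Equiv.Perm ι) :
    minCl P (x ∘ σ) = minCl P x := by
  unfold minCl
  congr 1
  exact permClass_comp x σ

lemma minCl_le (P : (ι → 𝒳) → ℝ) (x : ι → 𝒳) : minCl P x ≤ P x :=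
  Finset.inf'_le _ (Finset.mem_image.2 ⟨Equiv.refl ι, Finset.mem_univ _, rfl⟩)

lemma minCl_nonneg {P : (ι → 𝒳) → ℝ} (hP : ∀ x, 0 ≤ P x) (x : ι → 𝒳) :
    0 ≤ minCl P x :=
  Finset.le_inf' _ _ fun y _ => hP y

lemma exchWeight_eq [Nonempty 𝒳] (P : (ι → 𝒳) → ℝ) (hP : IsProb P) :
    exchWeight P = ∑ x, minCl P x := by
  set F : ℝ := ∑ x, minCl P x with hF
  have hF0 : 0 ≤ F := Finset.sum_nonneg fun x _ => minCl_nonneg hP.1 x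
  have key : ∀ l (Q : (ι → 𝒳) → ℝ), 0 ≤ l → Exchangeable Q →
      (∀ x, l * Q x ≤ P x) → ∀ x, l * Q x ≤ minCl P x := by
    intro l Q hl hQe hQ x
    refine Finset.le_inf' _ _ ?_
    intro y hy
    rcases Finset.mem_image.1 hy with ⟨σ, -, rfl⟩
    calc l * Q x = l * Q (x ∘ σ) := by rw [hQe σ x]
    _ ≤ P (x ∘ σ) := hQ _
  have hub : ∀ l ∈ {l : ℝ | ∃ Q : (ι → 𝒳) → ℝ,
      IsProb Q ∧ Exchangeable Q ∧ ∀ x, l * Q x ≤ P x}, l ≤ F := by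
    rintro l ⟨Q, hQp, hQe, hQ⟩
    rcases le_or_gt l 0 with h | h
    · exact h.trans hF0
    · have := key l Q h.le hQe hQ
      calc l = l * ∑ x, Q x := by rw [hQp.2, mul_one]
      _ = ∑ x, l * Q x := Finset.mul_sum _ _ _
      _ ≤ ∑ x, minCl P x := Finset.sum_le_sum fun x _ => this x
  have hmem : F ∈ {l : ℝ | ∃ Q : (ι → 𝒳) → ℝ,
      IsProb Q ∧ Exchangeable Q ∧ ∀ x, l * Q x ≤ P x} := by
    rcases eq_or_lt_of_le hF0 with h | h
    · refine ⟨fun _ => (Fintype.card (ι → 𝒳) : ℝ)⁻¹, ⟨fun _ => by positivity, ?_⟩,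
        fun σ x => rfl, fun x => ?_⟩
      · rw [Finset.sum_const, Finset.card_univ, nsmul_eq_mul]
        have : (0 : ℝ) < Fintype.card (ι → 𝒳) := by
          exact_mod_cast Fintype.card_pos
        field_simp
      · rw [← h, zero_mul]; exact hP.1 x
    · refine ⟨fun x => minCl P x / F, ⟨fun x => div_nonneg (minCl_nonneg hP.1 x) hF0, ?_⟩,
        fun σ x => by show minCl P (x ∘ σ) / F = minCl P x / F; rw [minCl_comp], fun x => ?_⟩
      · rw [← Finset.sum_div, ← hF, div_self h.ne']
      · rw [mul_div_cancel₀ _ h.ne']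
        exact (minCl_le P x).trans (le_refl _) |>.trans (le_refl _) |>.trans (le_refl _)
  exact le_antisymm (csSup_le ⟨F, hmem⟩ hub) (le_csSup ⟨F, hub⟩ hmem)

lemma minCl_sub_le (P P' : (ι → 𝒳) → ℝ) (x : ι → 𝒳) :
    minCl P' x - minCl P x ≤ ∑ y, |P' y - P y| := by
  obtain ⟨y, hy, hyeq⟩ := Finset.exists_mem_eq_inf' (permClass_nonempty x) P
  have h1 : minCl P' x ≤ P' y := Finset.inf'_le _ hy
  have h2 : P' y ≤ P y + |P' y - P y| := by
    have := le_abs_self (P' y - P y); linarith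
  have h3 : |P' y - P y| ≤ ∑ z, |P' z - P z| :=
    Finset.single_le_sum (f := fun z => |P' z - P z|) (fun z _ => abs_nonneg _) (Finset.mem_univ y)
  have : minCl P x = P y := hyeq
  linarith

lemma abs_minCl_sub (P P' : (ι → 𝒳) → ℝ) (x : ι → 𝒳) :
    |minCl P' x - minCl P x| ≤ ∑ y, |P' y - P y| := by
  rw [abs_sub_le_iff]
  constructor
  · exact minCl_sub_le P P' x
  · have := minCl_sub_le P' P x
    calc minCl P x - minCl P' x ≤ ∑ y, |P y - P' y| := this
    _ = ∑ y, |P' y - P y| := by simp_rw [abs_sub_comm]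

end Aux

lemma stmt12_main {ι 𝒳 : Type*} [Fintype ι] [Fintype 𝒳] [Nonempty 𝒳]
    {iF : Fintype (ι → 𝒳)} (P : (ι → 𝒳) → ℝ) (hP : @IsProb _ iF P)
    (ε : ℝ) (hε : 0 < ε) :
    ∃ δ : ℝ, 0 < δ ∧ ∀ P' : (ι → 𝒳) → ℝ, @IsProb _ iF P' → @tvDist _ iF P P' < δ →
      |exchWeight P' - exchWeight P| < ε := by
  have hi : iF = Pi.instFintype := Subsingleton.elim _ _
  subst hi
  set N : ℝ := (Fintype.card (ι → 𝒳) : ℝ) with hN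
  have hNpos : 0 < N := by
    rw [hN]; exact_mod_cast (Fintype.card_pos : 0 < Fintype.card (ι → 𝒳))
  refine ⟨ε / (2 * N), by positivity, ?_⟩
  intro P' hP' htv
  have htv' : tvDist P P' < ε / (2 * N) := htv
  rw [exchWeight_eq P' hP', exchWeight_eq P hP]
  have hsum : ∑ y, |P' y - P y| = 2 * tvDist P P' := by
    unfold tvDist
    rw [← mul_assoc]
    norm_num
    simp_rw [abs_sub_comm (P' _) (P _)]
  calc |∑ x, minCl P' x - ∑ x, minCl P x|
      = |∑ x, (minCl P' x - minCl P x)| := by rw [Finset.sum_sub_distrib]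
    _ ≤ ∑ x, |minCl P' x - minCl P x| := Finset.abs_sum_le_sum_abs _ _
    _ ≤ ∑ _x : ι → 𝒳, ∑ y, |P' y - P y| :=
        Finset.sum_le_sum fun x _ => abs_minCl_sub P P' x
    _ = N * (2 * tvDist P P') := by
        rw [Finset.sum_const, Finset.card_univ, nsmul_eq_mul, hsum]
    _ < N * (2 * (ε / (2 * N))) := by
        apply mul_lt_mul_of_pos_left _ hNpos
        linarith [htv']
    _ = ε := by field_simp

/-- The map `P ↦ λ_ℰ(P)` is continuous on the probability measures on `𝒳^d` with respect
to the total variation metric. -/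
theorem stmt12 {𝒳 : Type*} [Fintype 𝒳] (hk : 1 < Fintype.card 𝒳)
    {d : ℕ} (hd : 1 < d) :
    ∀ P : (Fin d → 𝒳) → ℝ, IsProb P → ∀ ε : ℝ, 0 < ε → ∃ δ : ℝ, 0 < δ ∧
      ∀ P' : (Fin d → 𝒳) → ℝ, IsProb P' → tvDist P P' < δ →
        |exchWeight P' - exchWeight P| < ε := by
  haveI : Nonempty 𝒳 := Fintype.card_pos_iff.mp (lt_trans Nat.zero_lt_one hk)
  intro P hP ε hε
  exact stmt12_main P hP ε hε
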